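/- Let g(x₁,x₂) = x₁² + x₂⁴ and h(x₁,x₂) = x₁² + x₂². Then for all x ∈ ℝ²: |g(x)|^{1/2} + |g(x)| ≥ |h(x)|, while there exist no constants c > 0 and α > 0 such that |g(x)|^α ≥ c|h(x)| for all x ∈ ℝ². -/

import Mathlib

noncomputable def gEx4 : ℝ × ℝ → ℝ := fun x => x.1 ^ 2 + x.2 ^ 4

noncomputable def hEx4 : ℝ × ℝ → ℝ := fun x => x.1 ^ 2 + x.2 ^ 2

/-- For `g = x₁² + x₂⁴` and `h = x₁² + x₂²`: the inequality
`|g|^{1/2} + |g| ≥ |h|` holds everywhere, while no inequality of the form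
`|g|^α ≥ c|h|` (with `c, α > 0`) holds on all of `ℝ²`. -/
theorem two_exponents_needed_example :
    (∀ x : ℝ × ℝ, |gEx4 x| ^ ((1 : ℝ) / 2) + |gEx4 x| ≥ |hEx4 x|) ∧
    ¬ ∃ c α : ℝ, 0 < c ∧ 0 < α ∧ ∀ x : ℝ × ℝ, |gEx4 x| ^ α ≥ c * |hEx4 x| := by
  constructor
  · intro x
    have hg : (0:ℝ) ≤ gEx4 x := by simp only [gEx4]; positivity
    have hh : (0:ℝ) ≤ hEx4 x := by simp only [hEx4]; positivity
    rw [abs_of_nonneg hg, abs_of_nonneg hh, ← Real.sqrt_eq_rpow]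
    have h1 : x.2 ^ 2 ≤ Real.sqrt (gEx4 x) := by
      rw [show gEx4 x = x.1 ^ 2 + x.2 ^ 4 from rfl]
      rw [Real.le_sqrt (by positivity) (by positivity)]
      nlinarith [sq_nonneg x.1]
    have h2 : x.1 ^ 2 ≤ gEx4 x := by
      simp only [gEx4]; nlinarith [pow_two_nonneg (x.2^2)]
    simp only [hEx4]
    linarith
  · rintro ⟨c, α, hc, hα, hall⟩
    by_cases hα1 : 1 ≤ α
    · -- use x = (0, t) with small t
      set t : ℝ := min 1 (Real.sqrt c / 2) with ht
      have hsc : 0 < Real.sqrt c := Real.sqrt_pos.mpr hc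
      have ht0 : 0 < t := lt_min one_pos (by positivity)
      have ht1 : t ≤ 1 := min_le_left _ _
      have htc : t ^ 2 < c := by
        have h1 : t ≤ Real.sqrt c / 2 := min_le_right _ _
        have h2 : t ^ 2 ≤ (Real.sqrt c / 2) ^ 2 := by nlinarith
        have h3 : (Real.sqrt c / 2) ^ 2 = c / 4 := by
          rw [div_pow, Real.sq_sqrt hc.le]; norm_num
        nlinarith
      have := hall (0, t)
      simp only [gEx4, hEx4] at this
      rw [abs_of_nonneg (by positivity : (0:ℝ) ≤ (0:ℝ)^2 + t ^ 4),
          abs_of_nonneg (by positivity : (0:ℝ) ≤ (0:ℝ)^2 + t ^ 2)] at this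
      norm_num at this
      have key : (t ^ 4) ^ α ≤ (t ^ 4) ^ (1:ℝ) := by
        apply Real.rpow_le_rpow_of_exponent_ge (by positivity)
        · exact pow_le_one₀ ht0.le ht1
        · exact hα1
      rw [Real.rpow_one] at key
      have : c * t ^ 2 ≤ t ^ 4 := le_trans this key
      nlinarith [mul_lt_mul_of_pos_right htc (pow_pos ht0 2)]
    · push_neg at hα1
      -- use x = (√s, 0) with s = max 1 ((2/c) ^ (1/(1-α))) large
      set s : ℝ := max 1 ((2 / c) ^ ((1:ℝ)/(1 - α))) with hs
      have hs1 : (1:ℝ) ≤ s := le_max_left _ _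
      have hs0 : (0:ℝ) < s := lt_of_lt_of_le one_pos hs1
      have h1α : (0:ℝ) < 1 - α := by linarith
      have hkey : 2 / c ≤ s ^ (1 - α) := by
        have h2c : (0:ℝ) ≤ 2 / c := by positivity
        calc 2 / c = ((2 / c) ^ ((1:ℝ)/(1 - α))) ^ (1 - α) := by
              rw [← Real.rpow_mul h2c, one_div_mul_cancel (ne_of_gt h1α), Real.rpow_one]
          _ ≤ s ^ (1 - α) := by
              apply Real.rpow_le_rpow (Real.rpow_nonneg h2c _) (le_max_right _ _) h1α.le
      have := hall (Real.sqrt s, 0)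
      simp only [gEx4, hEx4] at this
      rw [Real.sq_sqrt hs0.le] at this
      norm_num at this
      rw [abs_of_nonneg hs0.le] at this
      -- this : c * s ≤ s ^ α
      have hmul : s ^ α * s ^ (1 - α) = s := by
        rw [← Real.rpow_add hs0, add_sub_cancel, Real.rpow_one]
      have h2 : c * s * (2 / c) ≤ s ^ α * s ^ (1 - α) := by
        apply mul_le_mul this hkey (by positivity)
        positivity
      rw [hmul] at h2
      have : c * s * (2 / c) = 2 * s := by field_simp
      nlinarith
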